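/- arXiv:2202.07769 — 5 statements merged into one kernel-verified Lean document; each statement's English description precedes it below -/
import Mathlib

section
/- Let m ≥ 1 and let A be an m×m complex matrix that is symmetric (Aᵀ = A) and all of whose entries belong to the two-element set {−1+i, −1−i}. Then every eigenvalue λ of A satisfies −m ≤ Re(λ) ≤ 0 and −m ≤ Im(λ) ≤ m. -/
open ComplexConjugate

/-- Let `m ≥ 1` and let `A` be an `m × m` complex matrix that is
symmetric (`Aᵀ = A`) and all of whose entries belong to `{−1+i, −1−i}`.
Then every eigenvalue `λ` of `A` (i.e. `det (λ•I − A) = 0`) satisfies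
`−m ≤ Re λ ≤ 0` and `−m ≤ Im λ ≤ m`. -/
theorem bohemian_symmetric_strip
    (m : ℕ) (hm : 1 ≤ m) (A : Matrix (Fin m) (Fin m) ℂ)
    (hsym : A.transpose = A)
    (hent : ∀ j k : Fin m, A j k = -1 + Complex.I ∨ A j k = -1 - Complex.I)
    (lam : ℂ)
    (heig : Matrix.det (lam • (1 : Matrix (Fin m) (Fin m) ℂ) - A) = 0) :
    -(m : ℝ) ≤ lam.re ∧ lam.re ≤ 0 ∧ -(m : ℝ) ≤ lam.im ∧ lam.im ≤ (m : ℝ) := by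
  obtain ⟨v, hv0, hv⟩ := Matrix.exists_mulVec_eq_zero_iff.2 heig
  have hAv : A.mulVec v = lam • v := by
    rw [Matrix.sub_mulVec, sub_eq_zero, Matrix.smul_mulVec, Matrix.one_mulVec] at hv
    exact hv.symm
  set N : ℝ := ∑ j, Complex.normSq (v j) with hN
  have hNpos : 0 < N := by
    have hex : ∃ j, v j ≠ 0 := by
      by_contra h; push_neg at h; exact hv0 (funext h)
    obtain ⟨j, hj⟩ := hex
    exact Finset.sum_pos' (fun i _ => Complex.normSq_nonneg _)
      ⟨j, Finset.mem_univ j, Complex.normSq_pos.2 hj⟩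
  have hlamN : lam * (N : ℂ) = ∑ j, ∑ k, conj (v j) * (A j k * v k) := by
    have h1 : ∑ j, conj (v j) * (A.mulVec v) j = ∑ j, ∑ k, conj (v j) * (A j k * v k) := by
      simp only [Matrix.mulVec, dotProduct, Finset.mul_sum]
    rw [hAv] at h1
    rw [← h1, hN]
    push_cast
    rw [Finset.mul_sum]
    refine Finset.sum_congr rfl fun j _ => ?_
    simp only [Pi.smul_apply, smul_eq_mul]
    rw [← Complex.mul_conj]
    ring
  set s : ℂ := ∑ j, v j with hs
  set U : ℂ := ∑ j, ∑ k, conj (v j) * ((A j k + 1) * v k) with hU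
  have hsplit : lam * (N : ℂ) = -(Complex.normSq s : ℂ) + U := by
    rw [hlamN, hU]
    have h2 : ∀ j k : Fin m, conj (v j) * (A j k * v k)
        = -(conj (v j) * v k) + conj (v j) * ((A j k + 1) * v k) := by intros; ring
    simp_rw [h2, Finset.sum_add_distrib, Finset.sum_neg_distrib]
    congr 1
    rw [neg_inj, ← Finset.sum_mul_sum, ← map_sum, ← hs, mul_comm, Complex.mul_conj]
  have hAsymm : ∀ j k : Fin m, A k j = A j k := fun j k =>
    congrFun (congrFun hsym j) k
  have hBconj : ∀ j k : Fin m, conj (A j k + 1) = -(A j k + 1) := by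
    intro j k
    rcases hent j k with h | h <;> rw [h] <;>
      simp [Complex.ext_iff]
  have hBabs : ∀ j k : Fin m, ‖A j k + 1‖ = 1 := by
    intro j k
    rcases hent j k with h | h <;> rw [h]
    · have : (-1 + Complex.I + 1 : ℂ) = Complex.I := by ring
      rw [this, Complex.norm_I]
    · have : (-1 - Complex.I + 1 : ℂ) = -Complex.I := by ring
      rw [this, norm_neg, Complex.norm_I]
  have hUconj : conj U = -U := by
    rw [hU, map_sum]
    simp only [map_sum, map_mul, Complex.conj_conj, map_add, map_one]
    have h3 : ∀ j k : Fin m, v j * ((conj (A j k) + 1) * conj (v k))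
        = v j * (-(A j k + 1) * conj (v k)) := by
      intro j k
      have := hBconj j k
      rw [map_add, map_one] at this
      rw [this]
    simp_rw [h3]
    rw [Finset.sum_comm]
    simp only [← Finset.sum_neg_distrib]
    refine Finset.sum_congr rfl fun k _ => Finset.sum_congr rfl fun j _ => ?_
    rw [hAsymm j k]
    ring
  have hUre : U.re = 0 := by
    have h := congrArg Complex.re hUconj
    rw [Complex.conj_re, Complex.neg_re] at h
    linarith
  have hUabs : ‖U‖ ≤ (∑ j, ‖v j‖) ^ 2 := by
    calc ‖U‖ ≤ ∑ j, ∑ k, ‖conj (v j) * ((A j k + 1) * v k)‖ := by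
          rw [hU]
          refine (norm_sum_le _ _).trans (Finset.sum_le_sum fun j _ => ?_)
          exact norm_sum_le _ _
      _ = ∑ j, ∑ k, ‖v j‖ * ‖v k‖ := by
          refine Finset.sum_congr rfl fun j _ => Finset.sum_congr rfl fun k _ => ?_
          rw [norm_mul, norm_mul, hBabs, Complex.norm_conj]
          ring
      _ = (∑ j, ‖v j‖) ^ 2 := by
          rw [sq, Finset.sum_mul_sum]
  have hCS : (∑ j, ‖v j‖) ^ 2 ≤ (m : ℝ) * N := by
    have h := sq_sum_le_card_mul_sum_sq (s := (Finset.univ : Finset (Fin m)))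
      (f := fun j => ‖v j‖)
    simpa [Complex.sq_norm, hN] using h
  have hs_bound : Complex.normSq s ≤ (m : ℝ) * N := by
    have h1 : ‖s‖ ≤ ∑ j, ‖v j‖ := norm_sum_le _ _
    have h2 : Complex.normSq s ≤ (∑ j, ‖v j‖) ^ 2 := by
      rw [← Complex.sq_norm]
      exact pow_le_pow_left₀ (norm_nonneg _) h1 2
    linarith
  have hre : lam.re * N = -Complex.normSq s := by
    have h := congrArg Complex.re hsplit
    simp only [Complex.mul_re, Complex.ofReal_re, Complex.ofReal_im, mul_zero, sub_zero,
      Complex.add_re, Complex.neg_re, hUre, add_zero] at h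
    exact h
  have him : lam.im * N = U.im := by
    have h := congrArg Complex.im hsplit
    simp only [Complex.mul_im, Complex.ofReal_re, Complex.ofReal_im, mul_zero, zero_add,
      Complex.add_im, Complex.neg_im, Complex.ofReal_im, neg_zero, zero_add] at h
    exact h
  have himabs : |lam.im * N| ≤ (m : ℝ) * N := by
    rw [him]
    exact (Complex.abs_im_le_norm U).trans (hUabs.trans hCS)
  obtain ⟨him1, him2⟩ := abs_le.1 himabs
  refine ⟨?_, ?_, ?_, ?_⟩
  · refine (mul_le_mul_iff_of_pos_right hNpos).1 ?_
    rw [hre]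
    nlinarith [hs_bound]
  · refine (mul_le_mul_iff_of_pos_right hNpos).1 ?_
    rw [hre, zero_mul]
    have := Complex.normSq_nonneg s
    linarith
  · refine (mul_le_mul_iff_of_pos_right hNpos).1 ?_
    nlinarith
  · exact (mul_le_mul_iff_of_pos_right hNpos).1 him2
end

section
/- Let m ≥ 1, let a, b be real numbers, and let A be an m×m complex matrix that is symmetric (Aᵀ = A) and all of whose entries belong to the two-element set {a+bi, a−bi}. Then every eigenvalue λ of A satisfies min(m·a, 0) ≤ Re(λ) ≤ max(m·a, 0) and |Im(λ)| ≤ m·|b|. -/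
/-- Let `m ≥ 1`, let `a b : ℝ`, and let `A` be an `m × m` complex
matrix that is symmetric (`Aᵀ = A`) and all of whose entries belong to
`{a + b·i, a − b·i}`.  Then every eigenvalue `λ` of `A` satisfies
`min (m·a) 0 ≤ Re λ ≤ max (m·a) 0` and `|Im λ| ≤ m·|b|`. -/
theorem bohemian_symmetric_strip_general
    (m : ℕ) (hm : 1 ≤ m) (a b : ℝ) (A : Matrix (Fin m) (Fin m) ℂ)
    (hsym : A.transpose = A)
    (hent : ∀ j k : Fin m,
      A j k = (a : ℂ) + (b : ℂ) * Complex.I ∨ A j k = (a : ℂ) - (b : ℂ) * Complex.I)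
    (lam : ℂ)
    (heig : Matrix.det (lam • (1 : Matrix (Fin m) (Fin m) ℂ) - A) = 0) :
    min ((m : ℝ) * a) 0 ≤ lam.re ∧ lam.re ≤ max ((m : ℝ) * a) 0 ∧
      |lam.im| ≤ (m : ℝ) * |b| := by
  classical
  obtain ⟨v, hv0, hmv⟩ := Matrix.exists_mulVec_eq_zero_iff.2 heig
  have hAv : A.mulVec v = lam • v := by
    rw [Matrix.sub_mulVec, Matrix.smul_mulVec, Matrix.one_mulVec, sub_eq_zero] at hmv
    exact hmv.symm
  set N : ℝ := ∑ j, Complex.normSq (v j) with hN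
  have hNpos : 0 < N := by
    obtain ⟨j, hj⟩ := Function.ne_iff.1 hv0
    have h1 : Complex.normSq (v j) ≤ N :=
      Finset.single_le_sum (fun i _ => Complex.normSq_nonneg (v i)) (Finset.mem_univ j)
    have h2 : 0 < Complex.normSq (v j) := Complex.normSq_pos.2 hj
    linarith
  set Q : ℂ := ∑ j, ∑ k, A j k * ((starRingEnd ℂ) (v j) * v k) with hQdef
  have hQlam : Q = lam * (N : ℂ) := by
    have h1 : Q = ∑ j, (starRingEnd ℂ) (v j) * (A.mulVec v j) := by
      rw [hQdef]
      congr 1; funext j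
      simp only [Matrix.mulVec, dotProduct, Finset.mul_sum]
      congr 1; funext k; ring
    rw [h1, hAv]
    simp only [Pi.smul_apply, smul_eq_mul, hN]
    push_cast
    rw [Finset.mul_sum]
    congr 1; funext j
    rw [← Complex.mul_conj (v j)]
    ring
  set r : Fin m → Fin m → ℝ := fun j k => ((starRingEnd ℂ) (v j) * v k).re with hrdef
  have hAsym : ∀ j k, A k j = A j k := by
    intro j k
    conv_rhs => rw [← hsym]
    rfl
  have hQr : Q = ∑ j, ∑ k, A j k * ((r j k : ℝ) : ℂ) := by
    have hswap : Q = ∑ j, ∑ k, A j k * ((starRingEnd ℂ) (v k) * v j) := by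
      rw [hQdef, Finset.sum_comm]
      congr 1; funext j; congr 1; funext k
      rw [hAsym j k]
    have h2 : Q + Q = ∑ j, ∑ k, A j k * (2 * ((r j k : ℝ) : ℂ)) := by
      nth_rewrite 1 [hQdef]
      rw [hswap]
      rw [← Finset.sum_add_distrib]
      refine Finset.sum_congr rfl fun j _ => ?_
      rw [← Finset.sum_add_distrib]
      refine Finset.sum_congr rfl fun k _ => ?_
      have hcc : (starRingEnd ℂ) ((starRingEnd ℂ) (v j) * v k)
          = (starRingEnd ℂ) (v k) * v j := by
        rw [map_mul, Complex.conj_conj]; ring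
      have key : (starRingEnd ℂ) (v j) * v k + (starRingEnd ℂ) (v k) * v j
          = 2 * ((r j k : ℝ) : ℂ) := by
        rw [← hcc, Complex.add_conj, hrdef]
        push_cast; ring
      rw [← key]; ring
    have h3 : (2:ℂ) * Q = (2:ℂ) * ∑ j, ∑ k, A j k * ((r j k : ℝ) : ℂ) := by
      rw [two_mul, h2, Finset.mul_sum]
      refine Finset.sum_congr rfl fun j _ => ?_
      rw [Finset.mul_sum]
      refine Finset.sum_congr rfl fun k _ => ?_
      ring
    exact mul_left_cancel₀ (by norm_num : (2:ℂ) ≠ 0) h3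
  have hre : ∀ j k, (A j k).re = a := by
    intro j k; rcases hent j k with h | h <;> simp [h]
  have him : ∀ j k, |(A j k).im| = |b| := by
    intro j k; rcases hent j k with h | h <;> simp [h]
  set T : ℝ := ∑ j, ∑ k, r j k with hTdef
  have hQre : Q.re = a * T := by
    rw [hQr, Complex.re_sum, hTdef, Finset.mul_sum]
    refine Finset.sum_congr rfl fun j _ => ?_
    rw [Complex.re_sum, Finset.mul_sum]
    refine Finset.sum_congr rfl fun k _ => ?_
    rw [Complex.mul_re]
    simp [hre j k]
  have hQim : Q.im = ∑ j, ∑ k, (A j k).im * r j k := by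
    rw [hQr, Complex.im_sum]
    refine Finset.sum_congr rfl fun j _ => ?_
    rw [Complex.im_sum]
    refine Finset.sum_congr rfl fun k _ => ?_
    rw [Complex.mul_im]
    simp
  have hT : T = Complex.normSq (∑ j, v j) := by
    have h1 : T = (((∑ j, (starRingEnd ℂ) (v j)) * (∑ k, v k)).re) := by
      rw [Finset.sum_mul_sum, Complex.re_sum, hTdef]
      refine Finset.sum_congr rfl fun j _ => ?_
      rw [Complex.re_sum]
    rw [h1, ← map_sum, mul_comm, Complex.mul_conj]
    simp
  have hT0 : 0 ≤ T := hT ▸ Complex.normSq_nonneg _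
  set S : ℝ := ∑ j, ‖v j‖ with hSdef
  have hS0 : 0 ≤ S := Finset.sum_nonneg fun j _ => norm_nonneg _
  have hS2 : S ^ 2 ≤ (m : ℝ) * N := by
    have h := Finset.sum_mul_sq_le_sq_mul_sq Finset.univ (fun _ : Fin m => (1:ℝ))
      (fun j => ‖v j‖)
    simp only [one_mul, one_pow, Finset.sum_const, Finset.card_univ, Fintype.card_fin,
      nsmul_eq_mul, mul_one] at h
    calc S ^ 2 ≤ (m : ℝ) * ∑ j, ‖v j‖ ^ 2 := by rw [hSdef]; exact h
      _ = (m : ℝ) * N := by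
          rw [hN]; congr 1; exact Finset.sum_congr rfl fun j _ => Complex.sq_norm (v j)
  have hTm : T ≤ (m : ℝ) * N := by
    rw [hT]
    have h1 : ‖∑ j, v j‖ ≤ S := by
      rw [hSdef]; exact norm_sum_le _ _
    calc Complex.normSq (∑ j, v j) = ‖∑ j, v j‖ ^ 2 := (Complex.sq_norm _).symm
      _ ≤ S ^ 2 := pow_le_pow_left₀ (norm_nonneg _) h1 2
      _ ≤ (m : ℝ) * N := hS2
  have hrabs : ∀ j k, |r j k| ≤ ‖v j‖ * ‖v k‖ := by
    intro j k
    calc |r j k| ≤ ‖(starRingEnd ℂ) (v j) * v k‖ := Complex.abs_re_le_norm _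
      _ = ‖v j‖ * ‖v k‖ := by
          rw [norm_mul, Complex.norm_conj]
  have hQimB : |Q.im| ≤ |b| * ((m : ℝ) * N) := by
    rw [hQim]
    calc |∑ j, ∑ k, (A j k).im * r j k|
        ≤ ∑ j, |∑ k, (A j k).im * r j k| := Finset.abs_sum_le_sum_abs _ _
      _ ≤ ∑ j, ∑ k, |(A j k).im * r j k| :=
          Finset.sum_le_sum fun j _ => Finset.abs_sum_le_sum_abs _ _
      _ ≤ ∑ j, ∑ k, |b| * (‖v j‖ * ‖v k‖) := by
          refine Finset.sum_le_sum fun j _ => Finset.sum_le_sum fun k _ => ?_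
          rw [abs_mul, him j k]
          exact mul_le_mul_of_nonneg_left (hrabs j k) (abs_nonneg b)
      _ = |b| * (S * S) := by
          rw [hSdef, Finset.sum_mul_sum, Finset.mul_sum]
          refine Finset.sum_congr rfl fun j _ => ?_
          rw [Finset.mul_sum]
      _ ≤ |b| * ((m : ℝ) * N) := by
          apply mul_le_mul_of_nonneg_left _ (abs_nonneg b)
          calc S * S = S ^ 2 := (sq S).symm
            _ ≤ (m : ℝ) * N := hS2
  have hlre : lam.re * N = a * T := by
    have h := congrArg Complex.re hQlam
    rw [hQre] at h
    simpa [Complex.mul_re] using h.symm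
  have hlim : lam.im * N = Q.im := by
    have h := congrArg Complex.im hQlam
    simpa [Complex.mul_im] using h.symm
  refine ⟨?_, ?_, ?_⟩
  · rcases le_total a 0 with ha | ha
    · have h1 : min ((m:ℝ) * a) 0 = (m:ℝ) * a :=
        min_eq_left (mul_nonpos_of_nonneg_of_nonpos (Nat.cast_nonneg m) ha)
      rw [h1]
      nlinarith
    · have h1 : min ((m:ℝ) * a) 0 ≤ 0 := min_le_right _ _
      nlinarith
  · rcases le_total a 0 with ha | ha
    · have h1 : (0:ℝ) ≤ max ((m:ℝ) * a) 0 := le_max_right _ _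
      nlinarith
    · have h1 : (m:ℝ) * a ≤ max ((m:ℝ) * a) 0 := le_max_left _ _
      nlinarith
  · rw [← hlim] at hQimB
    rw [abs_mul, abs_of_pos hNpos] at hQimB
    nlinarith [abs_nonneg lam.im]
end

section
/- Let m ≥ 1 and let A be an m×m complex matrix that is skew-symmetric (Aᵀ = −A) and tridiagonal (A_{j,k} = 0 whenever |j − k| > 1), and whose superdiagonal entries A_{j,j+1} all belong to the two-element set {1, i}. Then every eigenvalue λ of A satisfies |Re(λ)| + |Im(λ)| ≤ 2; that is, the eigenvalues are confined to a diamond (a square rotated by π/4). -/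
private lemma reaux_bstd (w z : ℂ) :
    (w * z).re + (-(w * (starRingEnd ℂ) z)).re = -2 * w.im * z.im := by
  simp only [Complex.mul_re, Complex.neg_re, Complex.conj_re, Complex.conj_im]
  ring

/-- Let `m ≥ 1` and let `A` be an `m × m` complex matrix that is
skew-symmetric (`Aᵀ = −A`) and tridiagonal (`A j k = 0` whenever `|j − k| > 1`),
and whose superdiagonal entries `A j (j+1)` all belong to `{1, i}`.
Then every eigenvalue `λ` of `A` satisfies `|Re λ| + |Im λ| ≤ 2`:
the eigenvalues are confined to a diamond (a square rotated by π/4). -/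
theorem bohemian_skew_tridiagonal_diamond
    (m : ℕ) (hm : 1 ≤ m) (A : Matrix (Fin m) (Fin m) ℂ)
    (hskew : A.transpose = -A)
    (htri : ∀ j k : Fin m, 1 < |(j : ℤ) - (k : ℤ)| → A j k = 0)
    (hsup : ∀ j k : Fin m, (k : ℕ) = (j : ℕ) + 1 →
      A j k = 1 ∨ A j k = Complex.I)
    (lam : ℂ)
    (heig : Matrix.det (lam • (1 : Matrix (Fin m) (Fin m) ℂ) - A) = 0) :
    |lam.re| + |lam.im| ≤ 2 := by
  obtain ⟨v, hv0, hv⟩ := Matrix.exists_mulVec_eq_zero_iff.mpr heig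
  have hAv : A.mulVec v = lam • v := by
    have h := hv
    rw [Matrix.sub_mulVec, Matrix.smul_mulVec, Matrix.one_mulVec, sub_eq_zero] at h
    exact h.symm
  set c : ℝ := ∑ j, Complex.normSq (v j) with hc
  have hcpos : 0 < c := by
    obtain ⟨j, hj⟩ := Function.ne_iff.mp hv0
    exact Finset.sum_pos' (fun i _ => Complex.normSq_nonneg _)
      ⟨j, Finset.mem_univ j, Complex.normSq_pos.mpr hj⟩
  have hA' : ∀ j k : Fin m, A k j = -A j k := by
    intro j k
    have h := congrFun (congrFun hskew j) k
    simpa [Matrix.transpose_apply] using h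
  have hzero : ∀ j k : Fin m, ¬((k : ℕ) = (j : ℕ) + 1) → ¬((j : ℕ) = (k : ℕ) + 1) →
      A j k = 0 := by
    intro j k h1 h2
    by_cases hjk : j = k
    · subst hjk
      have := hA' j j
      linear_combination (1/2 : ℂ) * this
    · apply htri
      have hne : (j : ℕ) ≠ (k : ℕ) := fun h => hjk (Fin.ext h)
      have h3 : 2 ≤ (j : ℤ) - (k : ℤ) ∨ 2 ≤ (k : ℤ) - (j : ℤ) := by omega
      rcases h3 with h3 | h3
      · rw [_root_.abs_of_nonneg (by omega : (0:ℤ) ≤ (j : ℤ) - (k : ℤ))]; omega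
      · rw [abs_of_nonpos (by omega : (j : ℤ) - (k : ℤ) ≤ 0)]; omega
  -- key bound
  have key : ∀ u : ℂ, (∀ j k : Fin m, (k : ℕ) = (j : ℕ) + 1 → |(u * A j k).im| ≤ 1) →
      |(u * lam).re| ≤ 2 := by
    intro u hu
    set r : Fin m → Fin m → ℝ := fun j k => (u * A j k * ((starRingEnd ℂ) (v j) * v k)).re
      with hr
    set T : Finset (Fin m × Fin m) :=
      Finset.univ.filter (fun p : Fin m × Fin m => (p.2 : ℕ) = (p.1 : ℕ) + 1) with hT
    -- total sum equals (u*lam).re * c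
    have hsum : (∑ p : Fin m × Fin m, r p.1 p.2) = (u * lam).re * c := by
      have h1 : (∑ p : Fin m × Fin m, (u * A p.1 p.2 * ((starRingEnd ℂ) (v p.1) * v p.2)))
          = u * lam * (c : ℂ) := by
        rw [Fintype.sum_prod_type]
        have h2 : ∀ j : Fin m, (∑ k, u * A j k * ((starRingEnd ℂ) (v j) * v k))
            = u * ((starRingEnd ℂ) (v j) * (A.mulVec v j)) := by
          intro j
          rw [Matrix.mulVec, dotProduct, Finset.mul_sum, Finset.mul_sum]
          exact Finset.sum_congr rfl (fun k _ => by ring)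
        rw [Finset.sum_congr rfl (fun j _ => h2 j), ← Finset.mul_sum, hAv]
        have h3 : (∑ j, (starRingEnd ℂ) (v j) * ((lam • v) j)) = lam * (c : ℂ) := by
          simp only [Pi.smul_apply, smul_eq_mul, hc]
          push_cast
          rw [Finset.mul_sum]
          exact Finset.sum_congr rfl (fun j _ => by
            rw [Complex.normSq_eq_conj_mul_self]; ring)
        rw [h3]; ring
      have h4 : (∑ p : Fin m × Fin m, r p.1 p.2)
          = (∑ p : Fin m × Fin m, (u * A p.1 p.2 * ((starRingEnd ℂ) (v p.1) * v p.2))).re := by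
        rw [Complex.re_sum]
      rw [h4, h1, Complex.mul_re]
      simp
    -- restructure the sum into adjacent pairs
    have hswap_inj : ∀ p ∈ T, ∀ q ∈ T, Prod.swap p = Prod.swap q → p = q :=
      fun p _ q _ h => Prod.swap_injective h
    have hdisj : Disjoint T (T.image Prod.swap) := by
      rw [Finset.disjoint_left]
      intro p hp hp'
      simp only [hT, Finset.mem_filter, Finset.mem_univ, true_and] at hp
      simp only [Finset.mem_image] at hp'
      obtain ⟨q, hq, hqp⟩ := hp'
      simp only [hT, Finset.mem_filter, Finset.mem_univ, true_and] at hq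
      subst hqp
      simp only [Prod.snd_swap, Prod.fst_swap] at hp
      omega
    have hsplit : (∑ p : Fin m × Fin m, r p.1 p.2)
        = ∑ p ∈ T, (r p.1 p.2 + r p.2 p.1) := by
      have hzr : ∀ p : Fin m × Fin m, p ∉ T ∪ T.image Prod.swap → r p.1 p.2 = 0 := by
        intro p hp
        rw [Finset.mem_union] at hp
        push_neg at hp
        obtain ⟨hp1, hp2⟩ := hp
        simp only [hT, Finset.mem_filter, Finset.mem_univ, true_and] at hp1
        have hp2' : ¬((p.1 : ℕ) = (p.2 : ℕ) + 1) := by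
          intro h
          apply hp2
          rw [Finset.mem_image]
          exact ⟨Prod.swap p, by simp [hT, h], Prod.swap_swap p⟩
        simp [hr, hzero p.1 p.2 hp1 hp2']
      rw [← Finset.sum_subset (Finset.subset_univ (T ∪ T.image Prod.swap))
        (fun p _ hp => hzr p hp)]
      rw [Finset.sum_union hdisj, Finset.sum_image hswap_inj]
      simp only [Prod.fst_swap, Prod.snd_swap]
      rw [← Finset.sum_add_distrib]
    -- pairwise bound
    have hpair : ∀ p ∈ T, |r p.1 p.2 + r p.2 p.1|
        ≤ Complex.normSq (v p.1) + Complex.normSq (v p.2) := by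
      rintro ⟨j, k⟩ hp
      simp only [hT, Finset.mem_filter, Finset.mem_univ, true_and] at hp
      have ha := hu j k hp
      have hkj : A k j = -A j k := hA' j k
      have hconj : (starRingEnd ℂ) (v k) * v j
          = (starRingEnd ℂ) ((starRingEnd ℂ) (v j) * v k) := by
        rw [map_mul, Complex.conj_conj]; ring
      set w := u * A j k with hw
      set z := (starRingEnd ℂ) (v j) * v k with hz
      have h1 : r j k + r k j = -2 * w.im * z.im := by
        have e2 : r k j = (-(w * (starRingEnd ℂ) z)).re := by
          simp only [hr]
          rw [hkj, hconj]
          congr 1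
          rw [hw]; ring
        have e1 : r j k = (w * z).re := rfl
        rw [e1, e2]
        exact reaux_bstd w z
      rw [h1]
      have h2 : |z.im| ≤ ‖v j‖ * ‖v k‖ := by
        calc |z.im| ≤ ‖z‖ := Complex.abs_im_le_norm z
        _ = ‖v j‖ * ‖v k‖ := by
          rw [hz, norm_mul, Complex.norm_conj]
      have h3 : |(-2 : ℝ) * w.im * z.im| = 2 * (|w.im| * |z.im|) := by
        rw [abs_mul, abs_mul]
        norm_num [mul_assoc]
      rw [h3]
      have h4 : |w.im| * |z.im| ≤ 1 * (‖v j‖ * ‖v k‖) := by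
        apply mul_le_mul ha h2 (abs_nonneg _) zero_le_one
      nlinarith [Complex.sq_norm (v j), Complex.sq_norm (v k),
        sq_nonneg (‖v j‖ - ‖v k‖),
        norm_nonneg (v j), norm_nonneg (v k)]
    -- sum the bound
    have hfst : (∑ p ∈ T, Complex.normSq (v p.1)) ≤ c := by
      have hinj : ∀ p ∈ T, ∀ q ∈ T, p.1 = q.1 → p = q := by
        rintro ⟨j, k⟩ hp ⟨j', k'⟩ hq h
        simp only [hT, Finset.mem_filter, Finset.mem_univ, true_and] at hp hq
        simp only at h
        subst h
        have : k = k' := Fin.ext (by omega)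
        simp [this]
      have e := Finset.sum_image (g := Prod.fst) (s := T)
        (f := fun j => Complex.normSq (v j)) hinj
      rw [← e]
      exact Finset.sum_le_sum_of_subset_of_nonneg (Finset.subset_univ _)
        (fun i _ _ => Complex.normSq_nonneg _)
    have hsnd : (∑ p ∈ T, Complex.normSq (v p.2)) ≤ c := by
      have hinj : ∀ p ∈ T, ∀ q ∈ T, p.2 = q.2 → p = q := by
        rintro ⟨j, k⟩ hp ⟨j', k'⟩ hq h
        simp only [hT, Finset.mem_filter, Finset.mem_univ, true_and] at hp hq
        simp only at h
        subst h
        have : j = j' := Fin.ext (by omega)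
        simp [this]
      have e := Finset.sum_image (g := Prod.snd) (s := T)
        (f := fun j => Complex.normSq (v j)) hinj
      rw [← e]
      exact Finset.sum_le_sum_of_subset_of_nonneg (Finset.subset_univ _)
        (fun i _ _ => Complex.normSq_nonneg _)
    have hbound : |(u * lam).re| * c ≤ 2 * c := by
      have : |(u * lam).re * c| ≤ 2 * c := by
        rw [← hsum, hsplit]
        calc |∑ p ∈ T, (r p.1 p.2 + r p.2 p.1)|
            ≤ ∑ p ∈ T, |r p.1 p.2 + r p.2 p.1| := Finset.abs_sum_le_sum_abs _ _
        _ ≤ ∑ p ∈ T, (Complex.normSq (v p.1) + Complex.normSq (v p.2)) :=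
            Finset.sum_le_sum hpair
        _ = (∑ p ∈ T, Complex.normSq (v p.1)) + (∑ p ∈ T, Complex.normSq (v p.2)) :=
            Finset.sum_add_distrib
        _ ≤ c + c := add_le_add hfst hsnd
        _ = 2 * c := by ring
      rwa [abs_mul, abs_of_pos hcpos] at this
    exact le_of_mul_le_mul_right (by linarith) hcpos
  -- apply with u = 1 - i and u = 1 + i
  have k1 : |lam.re + lam.im| ≤ 2 := by
    have h := key (1 - Complex.I) (by
      intro j k hk
      rcases hsup j k hk with h | h <;> simp [h, Complex.sub_im, Complex.mul_im] <;> norm_num)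
    have : ((1 - Complex.I) * lam).re = lam.re + lam.im := by
      simp [Complex.mul_re, Complex.sub_re, Complex.sub_im]
    rwa [this] at h
  have k2 : |lam.re - lam.im| ≤ 2 := by
    have h := key (1 + Complex.I) (by
      intro j k hk
      rcases hsup j k hk with h | h <;> simp [h, Complex.add_im, Complex.mul_im] <;> norm_num)
    have : ((1 + Complex.I) * lam).re = lam.re - lam.im := by
      simp [Complex.mul_re, Complex.add_re, Complex.add_im]
      try ring
    rwa [this] at h
  rw [abs_le] at k1 k2
  rcases abs_cases lam.re with ⟨h1, _⟩ | ⟨h1, _⟩ <;>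
    rcases abs_cases lam.im with ⟨h2, _⟩ | ⟨h2, _⟩ <;> linarith [k1.1, k1.2, k2.1, k2.2]
end

section
/- Let m ≥ 1, let B > 0, and let H be an m×m complex upper Hessenberg matrix (H_{j,k} = 0 whenever j > k+1) with zero diagonal (H_{j,j} = 0 for all j), whose subdiagonal entries all have modulus one (|H_{j+1,j}| = 1 for 1 ≤ j ≤ m−1), and whose entries above the diagonal satisfy |H_{j,k}| ≤ B for all k > j. Then every eigenvalue λ of H satisfies |λ| ≤ 1 + 2√B. In particular this bound is independent of the dimension m. -/
/-- Let `m ≥ 1`, `B > 0`, and let `H` be an `m × m` complex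
upper Hessenberg matrix (`H j k = 0` whenever `j > k + 1`) with zero diagonal,
whose subdiagonal entries all have modulus one, and whose entries above the
diagonal satisfy `|H j k| ≤ B` for `k > j`.  Then every eigenvalue `λ` of `H`
satisfies `|λ| ≤ 1 + 2√B`; in particular the bound is independent of `m`. -/
theorem unit_upperHessenberg_zeroDiag_eigenvalue_bound
    (m : ℕ) (hm : 1 ≤ m) (B : ℝ) (hB : 0 < B)
    (H : Matrix (Fin m) (Fin m) ℂ)
    (hhess : ∀ j k : Fin m, (k : ℕ) + 1 < (j : ℕ) → H j k = 0)
    (hdiag : ∀ j : Fin m, H j j = 0)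
    (hsub : ∀ j k : Fin m, (j : ℕ) = (k : ℕ) + 1 → ‖H j k‖ = 1)
    (habove : ∀ j k : Fin m, (j : ℕ) < (k : ℕ) → ‖H j k‖ ≤ B)
    (lam : ℂ)
    (heig : Matrix.det (lam • (1 : Matrix (Fin m) (Fin m) ℂ) - H) = 0) :
    ‖lam‖ ≤ 1 + 2 * Real.sqrt B := by
  by_contra hcon
  push_neg at hcon
  set sB := Real.sqrt B with hsBdef
  have hsB : 0 < sB := Real.sqrt_pos.2 hB
  have hsB2 : sB * sB = B := Real.mul_self_sqrt hB.le
  set s : ℝ := 1 + sB with hsdef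
  have hs1 : 1 < s := by linarith
  have hs0 : 0 < s := by linarith
  set q : ℝ := 1 / s with hqdef
  have hq0 : 0 < q := by positivity
  have hq1 : q < 1 := by
    rw [hqdef, div_lt_one hs0]; exact hs1
  have hqs : s * q = 1 := by
    rw [hqdef, mul_one_div, div_self hs0.ne']
  set r := ‖lam‖ with hrdef
  obtain ⟨v, hv0, hv⟩ := Matrix.exists_mulVec_eq_zero_iff.mpr heig
  set A : Fin m → ℝ := fun j => ‖v j‖ with hAdef
  have hA0 : ∀ j, 0 ≤ A j := fun j => norm_nonneg _
  have hrow0 : ∀ j, lam * v j = ∑ k, H j k * v k := by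
    intro j
    have h1 := congrFun hv j
    simp only [Matrix.sub_mulVec, Matrix.smul_mulVec, Matrix.one_mulVec,
      Pi.sub_apply, Pi.smul_apply, Pi.zero_apply, smul_eq_mul, sub_eq_zero] at h1
    rw [h1]
    simp [Matrix.mulVec, dotProduct]
  -- row inequality
  have hrow : ∀ j : Fin m, r * A j ≤
      (∑ k ∈ Finset.univ.filter (fun k : Fin m => (k : ℕ) + 1 = (j : ℕ)), A k)
      + B * ∑ k ∈ Finset.univ.filter (fun k : Fin m => (j : ℕ) < (k : ℕ)), A k := by
    intro j
    have h1 : r * A j = ‖∑ k, H j k * v k‖ := by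
      rw [← hrow0 j, norm_mul]
    have h2 : ‖∑ k, H j k * v k‖ ≤ ∑ k, ‖H j k‖ * A k := by
      refine (norm_sum_le _ _).trans ?_
      refine Finset.sum_le_sum fun k _ => ?_
      rw [norm_mul]
    have h3 : ∑ k, ‖H j k‖ * A k ≤
        ∑ k : Fin m, ((if (k : ℕ) + 1 = (j : ℕ) then A k else 0)
          + (if (j : ℕ) < (k : ℕ) then B * A k else 0)) := by
      refine Finset.sum_le_sum fun k _ => ?_
      rcases Nat.lt_trichotomy (k : ℕ) (j : ℕ) with hlt | heq | hgt
      · rcases Nat.lt_or_ge ((k : ℕ) + 1) (j : ℕ) with hlt2 | hge2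
        · rw [hhess j k hlt2]
          simp only [norm_zero, zero_mul]
          positivity
        · have he : (k : ℕ) + 1 = (j : ℕ) := by omega
          rw [hsub j k he.symm, one_mul]
          simp only [he, if_pos, if_neg (by omega : ¬ (j : ℕ) < (k : ℕ))]
          linarith [hA0 k]
      · have : k = j := Fin.ext heq
        rw [this, hdiag j]
        simp only [norm_zero, zero_mul]
        positivity
      · have h4 := habove j k hgt
        simp only [if_neg (by omega : ¬ (k : ℕ) + 1 = (j : ℕ)), if_pos hgt, zero_add]
        exact mul_le_mul_of_nonneg_right h4 (hA0 k)
    rw [h1]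
    refine h2.trans (h3.trans ?_)
    rw [Finset.sum_add_distrib, Finset.sum_filter, Finset.sum_filter, Finset.mul_sum]
    simp [Finset.mul_sum]
  -- geometric sum bound
  have hgeo : ∀ j : Fin m,
      ∑ k ∈ Finset.univ.filter (fun k : Fin m => (j : ℕ) < (k : ℕ)), q ^ ((k : ℕ) - (j : ℕ))
        ≤ 1 / sB := by
    intro j
    have hinj : ∀ x ∈ Finset.univ.filter (fun k : Fin m => (j : ℕ) < (k : ℕ)),
        ∀ y ∈ Finset.univ.filter (fun k : Fin m => (j : ℕ) < (k : ℕ)),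
        (x : ℕ) - (j : ℕ) = (y : ℕ) - (j : ℕ) → x = y := by
      intro x hx y hy hxy
      simp only [Finset.mem_filter] at hx hy
      exact Fin.ext (by omega)
    rw [← Finset.sum_image (g := fun k : Fin m => (k : ℕ) - (j : ℕ)) hinj]
    have hsub1 : (Finset.univ.filter (fun k : Fin m => (j : ℕ) < (k : ℕ))).image
        (fun k : Fin m => (k : ℕ) - (j : ℕ)) ⊆ Finset.Ico 1 m := by
      intro i hi
      simp only [Finset.mem_image, Finset.mem_filter] at hi
      obtain ⟨k, ⟨_, hk⟩, rfl⟩ := hi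
      simp only [Finset.mem_Ico]
      exact ⟨by omega, by omega⟩
    refine (Finset.sum_le_sum_of_subset_of_nonneg hsub1 (fun i _ _ => by positivity)).trans ?_
    rw [Finset.sum_Ico_eq_sum_range (f := fun i => q ^ i) (m := 1) (n := m)]
    have hsum : ∑ i ∈ Finset.range (m - 1), q ^ (1 + i)
        = q * ∑ i ∈ Finset.range (m - 1), q ^ i := by
      rw [Finset.mul_sum]
      exact Finset.sum_congr rfl fun i _ => by ring
    rw [hsum, geom_sum_eq (by linarith : q ≠ 1)]
    have h1q : 0 < 1 - q := by linarith
    have key : q * ((q ^ (m - 1) - 1) / (q - 1)) ≤ q / (1 - q) := by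
      have e1 : (q ^ (m - 1) - 1)/(q - 1) = (1 - q ^ (m - 1))/(1 - q) := by
        rw [div_eq_div_iff (by linarith) (by linarith)]; ring
      rw [e1]
      have e2 : q * ((1 - q ^ (m - 1))/(1 - q)) = (q * (1 - q ^ (m - 1)))/(1 - q) := by ring
      rw [e2, div_le_div_iff_of_pos_right h1q]
      nlinarith [pow_nonneg hq0.le (m - 1)]
    refine key.trans (le_of_eq ?_)
    rw [hqdef, hsdef]
    have h1 : (0:ℝ) < 1 + sB := by linarith
    field_simp
    rw [add_sub_cancel_left, div_self hsB.ne']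
  -- tail bound given the decay property
  have htail : ∀ j : Fin m, (∀ k : Fin m, j ≤ k → A k * s ^ ((k : ℕ) - (j : ℕ)) ≤ A j) →
      ∑ k ∈ Finset.univ.filter (fun k : Fin m => (j : ℕ) < (k : ℕ)), A k ≤ A j * (1 / sB) := by
    intro j hS
    have step : ∀ k ∈ Finset.univ.filter (fun k : Fin m => (j : ℕ) < (k : ℕ)),
        A k ≤ A j * q ^ ((k : ℕ) - (j : ℕ)) := by
      intro k hk
      simp only [Finset.mem_filter] at hk
      have hjk : j ≤ k := le_of_lt (by exact hk.2)
      have h1 := hS k hjk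
      have h2 := mul_le_mul_of_nonneg_right h1 (pow_nonneg hq0.le ((k : ℕ) - (j : ℕ)))
      calc A k = A k * (s ^ ((k:ℕ) - (j:ℕ)) * q ^ ((k:ℕ) - (j:ℕ))) := by
            rw [← mul_pow, hqs, one_pow, mul_one]
        _ = A k * s ^ ((k:ℕ) - (j:ℕ)) * q ^ ((k:ℕ) - (j:ℕ)) := by ring
        _ ≤ A j * q ^ ((k:ℕ) - (j:ℕ)) := h2
    calc ∑ k ∈ Finset.univ.filter (fun k : Fin m => (j : ℕ) < (k : ℕ)), A k
        ≤ ∑ k ∈ Finset.univ.filter (fun k : Fin m => (j : ℕ) < (k : ℕ)),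
            A j * q ^ ((k : ℕ) - (j : ℕ)) := Finset.sum_le_sum step
      _ = A j * ∑ k ∈ Finset.univ.filter (fun k : Fin m => (j : ℕ) < (k : ℕ)),
            q ^ ((k : ℕ) - (j : ℕ)) := by rw [Finset.mul_sum]
      _ ≤ A j * (1 / sB) := mul_le_mul_of_nonneg_left (hgeo j) (hA0 j)
  have hBsB : B * (1 / sB) = sB := by
    field_simp
    linarith [hsB2]
  -- main downward induction
  have main : ∀ t : ℕ, ∀ j : Fin m, m ≤ (j : ℕ) + 1 + t →
      ∀ k : Fin m, j ≤ k → A k * s ^ ((k : ℕ) - (j : ℕ)) ≤ A j := by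
    intro t
    induction t with
    | zero =>
      intro j hj k hk
      have : k = j := Fin.ext (by omega)
      rw [this]
      have : (j : ℕ) - (j : ℕ) = 0 := by omega
      rw [this, pow_zero, mul_one]
    | succ t ih =>
      intro j hj k hk
      by_cases hcase : m ≤ (j : ℕ) + 1 + t
      · exact ih j hcase k hk
      · have hj1 : (j : ℕ) + 1 < m := by omega
        set j' : Fin m := ⟨(j : ℕ) + 1, hj1⟩ with hj'def
        have hS' : ∀ k : Fin m, j' ≤ k → A k * s ^ ((k : ℕ) - (j' : ℕ)) ≤ A j' :=
          ih j' (by simp only [hj'def]; omega)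
        -- the step: s * A j' ≤ A j
        have hstep : s * A j' ≤ A j := by
          have h1 := hrow j'
          have h2 : (∑ k ∈ Finset.univ.filter (fun k : Fin m => (k : ℕ) + 1 = (j' : ℕ)), A k)
              = A j := by
            have : Finset.univ.filter (fun k : Fin m => (k : ℕ) + 1 = (j' : ℕ)) = {j} := by
              ext x
              simp only [Finset.mem_filter, Finset.mem_univ, true_and, Finset.mem_singleton,
                hj'def]
              constructor
              · intro hx; exact Fin.ext (by omega)
              · intro hx; rw [hx]
            rw [this, Finset.sum_singleton]
          have h3 := htail j' hS'
          have h4 : r * A j' ≤ A j + B * (A j' * (1 / sB)) := by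
            rw [h2] at h1
            refine h1.trans ?_
            have := mul_le_mul_of_nonneg_left h3 hB.le
            linarith
          have h5 : B * (A j' * (1 / sB)) = sB * A j' := by
            rw [← mul_assoc, mul_comm B (A j'), mul_assoc, hBsB]; ring
          rw [h5] at h4
          nlinarith [hA0 j', hA0 j]
        rcases eq_or_lt_of_le hk with heq | hlt
        · rw [← heq]
          have : (j : ℕ) - (j : ℕ) = 0 := by omega
          rw [this, pow_zero, mul_one]
        · have hjk : (j : ℕ) < (k : ℕ) := hlt
          have hj'k : j' ≤ k := by
            simp only [Fin.le_def, hj'def]; omega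
          have hd : (k : ℕ) - (j : ℕ) = ((k : ℕ) - (j' : ℕ)) + 1 := by
            simp only [hj'def]; omega
          rw [hd, pow_succ]
          calc A k * (s ^ ((k : ℕ) - (j' : ℕ)) * s)
              = (A k * s ^ ((k : ℕ) - (j' : ℕ))) * s := by ring
            _ ≤ A j' * s := mul_le_mul_of_nonneg_right (hS' k hj'k) hs0.le
            _ = s * A j' := by ring
            _ ≤ A j := hstep
  -- final contradiction at row 0
  set j0 : Fin m := ⟨0, hm⟩ with hj0def
  have hS0 : ∀ k : Fin m, j0 ≤ k → A k * s ^ ((k : ℕ) - (j0 : ℕ)) ≤ A j0 :=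
    main m j0 (by simp only [hj0def]; omega)
  have hA0pos : 0 < A j0 := by
    have ⟨k, hk⟩ := Function.ne_iff.mp hv0
    have hAk : 0 < A k := by
      simp only [hAdef]
      exact norm_pos_iff.mpr hk
    have := hS0 k (by simp only [Fin.le_def, hj0def]; omega)
    nlinarith [pow_pos hs0 ((k : ℕ) - (j0 : ℕ))]
  have h1 := hrow j0
  have h2 : (∑ k ∈ Finset.univ.filter (fun k : Fin m => (k : ℕ) + 1 = (j0 : ℕ)), A k) = 0 := by
    have : Finset.univ.filter (fun k : Fin m => (k : ℕ) + 1 = (j0 : ℕ)) = ∅ := by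
      ext x
      simp only [Finset.mem_filter, Finset.mem_univ, true_and, Finset.notMem_empty,
        iff_false, hj0def]
      omega
    rw [this, Finset.sum_empty]
  have h3 := htail j0 hS0
  have h4 : r * A j0 ≤ sB * A j0 := by
    rw [h2, zero_add] at h1
    refine h1.trans ?_
    have h5 := mul_le_mul_of_nonneg_left h3 hB.le
    have h6 : B * (A j0 * (1 / sB)) = sB * A j0 := by
      rw [← mul_assoc, mul_comm B (A j0), mul_assoc, hBsB]; ring
    linarith
  nlinarith
end

section
/- Let m ≥ 1, let B ≥ 0, and let H be an m×m complex upper Hessenberg matrix (H_{j,k} = 0 whenever j > k+1) with zero diagonal (H_{j,j} = 0 for all j), whose subdiagonal entries all have modulus one (|H_{j+1,j}| = 1 for 1 ≤ j ≤ m−1), and whose entries above the diagonal satisfy |H_{j,k}| ≤ B for all k > j. Then for every real number r > 1, every eigenvalue λ of H satisfies |λ| ≤ r + B/(r − 1). (This follows by applying the Gerschgorin disk theorem to D H D⁻¹, where D = diag(1, r, r², …, r^{m−1}).) -/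
/-- Geometric tail bound: `∑_{i<n} x^i ≤ 1/(1-x)` for `0 ≤ x < 1`. -/
lemma aux_geom_sum_le {x : ℝ} (h0 : 0 ≤ x) (h1 : x < 1) (n : ℕ) :
    ∑ i ∈ Finset.range n, x ^ i ≤ (1 - x)⁻¹ := by
  have := Summable.sum_le_tsum (Finset.range n) (fun i _ => pow_nonneg h0 i)
    (summable_geometric_of_lt_one h0 h1)
  rwa [tsum_geometric_of_lt_one h0 h1] at this

/-- Let `m ≥ 1`, `B ≥ 0`, and let `H` be an `m × m` complex
upper Hessenberg matrix with zero diagonal, whose subdiagonal entries all have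
modulus one, and whose entries above the diagonal satisfy `|H j k| ≤ B` for
`k > j`.  Then for every real `r > 1`, every eigenvalue `λ` of `H` satisfies
`|λ| ≤ r + B/(r − 1)`  (Gerschgorin applied to `D H D⁻¹`, `D = diag(1,r,…,r^{m−1})`). -/
theorem unit_upperHessenberg_zeroDiag_gerschgorin_bound
    (m : ℕ) (hm : 1 ≤ m) (B : ℝ) (hB : 0 ≤ B)
    (H : Matrix (Fin m) (Fin m) ℂ)
    (hhess : ∀ j k : Fin m, (k : ℕ) + 1 < (j : ℕ) → H j k = 0)
    (hdiag : ∀ j : Fin m, H j j = 0)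
    (hsub : ∀ j k : Fin m, (j : ℕ) = (k : ℕ) + 1 → ‖H j k‖ = 1)
    (habove : ∀ j k : Fin m, (j : ℕ) < (k : ℕ) → ‖H j k‖ ≤ B)
    (r : ℝ) (hr : 1 < r)
    (lam : ℂ)
    (heig : Matrix.det (lam • (1 : Matrix (Fin m) (Fin m) ℂ) - H) = 0) :
    ‖lam‖ ≤ r + B / (r - 1) := by
  have hr0 : (0:ℝ) < r := lt_trans zero_lt_one hr
  -- get an eigenvector
  obtain ⟨v, hv, hmv⟩ := Matrix.exists_mulVec_eq_zero_iff.mpr heig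
  have hrow : ∀ j : Fin m, lam * v j = ∑ k : Fin m, H j k * v k := by
    intro j
    have h := congrFun hmv j
    simp only [Matrix.sub_mulVec, Pi.sub_apply, Matrix.smul_mulVec, Pi.smul_apply,
      Matrix.one_mulVec, smul_eq_mul, Pi.zero_apply, sub_eq_zero] at h
    simpa [Matrix.mulVec, dotProduct] using h
  -- weighted coordinates
  set f : Fin m → ℝ := fun k => r ^ (k : ℕ) * ‖v k‖ with hf
  have hfnonneg : ∀ k, 0 ≤ f k := fun k =>
    mul_nonneg (pow_nonneg hr0.le _) (norm_nonneg _)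
  have : Nonempty (Fin m) := ⟨⟨0, hm⟩⟩
  obtain ⟨j, -, hmax⟩ := Finset.exists_max_image Finset.univ f ⟨Classical.arbitrary (Fin m),
    Finset.mem_univ _⟩
  have hmax : ∀ k : Fin m, f k ≤ f j := fun k => hmax k (Finset.mem_univ k)
  -- f j > 0
  have hc : 0 < f j := by
    obtain ⟨k, hk⟩ : ∃ k, v k ≠ 0 := by
      by_contra h
      push_neg at h
      exact hv (funext h)
    have : 0 < f k := mul_pos (pow_pos hr0 _) (by
      simpa [norm_pos_iff] using hk)
    exact lt_of_lt_of_le this (hmax k)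
  -- key row estimate
  have hkey : ‖lam‖ * f j ≤ (∑ k : Fin m, r ^ (j:ℕ) / r ^ (k:ℕ) * ‖H j k‖) * f j := by
    have h1 : ‖lam‖ * f j = r ^ (j:ℕ) * ‖lam * v j‖ := by
      rw [norm_mul]; ring
    rw [h1, hrow j]
    calc r ^ (j:ℕ) * ‖∑ k : Fin m, H j k * v k‖
        ≤ r ^ (j:ℕ) * ∑ k : Fin m, ‖H j k‖ * ‖v k‖ := by
          apply mul_le_mul_of_nonneg_left _ (pow_nonneg hr0.le _)
          refine le_trans (norm_sum_le _ _) (le_of_eq ?_)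
          simp [norm_mul]
      _ = ∑ k : Fin m, r ^ (j:ℕ) / r ^ (k:ℕ) * ‖H j k‖ * f k := by
          rw [Finset.mul_sum]
          refine Finset.sum_congr rfl fun k _ => ?_
          have hk0 : (r:ℝ) ^ (k:ℕ) ≠ 0 := by positivity
          field_simp [hf]
          ring
      _ ≤ ∑ k : Fin m, r ^ (j:ℕ) / r ^ (k:ℕ) * ‖H j k‖ * f j := by
          refine Finset.sum_le_sum fun k _ => ?_
          exact mul_le_mul_of_nonneg_left (hmax k)
            (mul_nonneg (by positivity) (norm_nonneg _))
      _ = (∑ k : Fin m, r ^ (j:ℕ) / r ^ (k:ℕ) * ‖H j k‖) * f j := by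
          rw [Finset.sum_mul]
  -- bound the row sum
  have hrowsum : (∑ k : Fin m, r ^ (j:ℕ) / r ^ (k:ℕ) * ‖H j k‖) ≤ r + B / (r - 1) := by
    have hsplit : (∑ k : Fin m, r ^ (j:ℕ) / r ^ (k:ℕ) * ‖H j k‖)
        ≤ r + ∑ k ∈ Finset.univ.filter (fun k : Fin m => (j:ℕ) < (k:ℕ)),
            B * (r⁻¹) ^ ((k:ℕ) - (j:ℕ)) := by
      classical
      have hgt : (∑ k ∈ Finset.univ.filter (fun k : Fin m => (j:ℕ) < (k:ℕ)),
            r ^ (j:ℕ) / r ^ (k:ℕ) * ‖H j k‖)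
          ≤ ∑ k ∈ Finset.univ.filter (fun k : Fin m => (j:ℕ) < (k:ℕ)),
            B * (r⁻¹) ^ ((k:ℕ) - (j:ℕ)) := by
        refine Finset.sum_le_sum fun k hk => ?_
        simp only [Finset.mem_filter] at hk
        have hjk := hk.2
        have h1 : r ^ (j:ℕ) / r ^ (k:ℕ) = (r⁻¹) ^ ((k:ℕ) - (j:ℕ)) := by
          have h2 : (j:ℕ) + ((k:ℕ) - (j:ℕ)) = (k:ℕ) := by omega
          rw [inv_pow, div_eq_iff (by positivity), inv_mul_eq_div,
            eq_div_iff (by positivity), ← pow_add, h2]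
        rw [h1, mul_comm B]
        exact mul_le_mul_of_nonneg_left (habove j k hjk) (by positivity)
      have hle : (∑ k ∈ Finset.univ.filter (fun k : Fin m => ¬ (j:ℕ) < (k:ℕ)),
            r ^ (j:ℕ) / r ^ (k:ℕ) * ‖H j k‖) ≤ r := by
        have : ∀ k ∈ Finset.univ.filter (fun k : Fin m => ¬ (j:ℕ) < (k:ℕ)),
            r ^ (j:ℕ) / r ^ (k:ℕ) * ‖H j k‖
              = if (j:ℕ) = (k:ℕ) + 1 then r else 0 := by
          intro k hk
          simp only [Finset.mem_filter, not_lt] at hk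
          rcases lt_trichotomy ((k:ℕ) + 1) (j:ℕ) with h | h | h
          · rw [hhess j k h, norm_zero, mul_zero, if_neg (by omega)]
          · rw [if_pos h.symm, hsub j k h.symm, mul_one, ← h, pow_succ, mul_comm,
              mul_div_assoc, div_self (show (r:ℝ) ^ (k:ℕ) ≠ 0 by positivity), mul_one]
          · have : j = k := Fin.ext (by omega)
            subst this
            rw [hdiag j, norm_zero, mul_zero, if_neg (by omega)]
        rw [Finset.sum_congr rfl this]
        set s := Finset.univ.filter (fun k : Fin m => ¬ (j:ℕ) < (k:ℕ)) with hs
        have hcard : (s.filter (fun k : Fin m => (j:ℕ) = (k:ℕ) + 1)).card ≤ 1 := by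
          refine Finset.card_le_one.mpr fun a ha b hb => ?_
          simp only [Finset.mem_filter] at ha hb
          exact Fin.ext (by omega)
        calc (∑ k ∈ s, if (j:ℕ) = (k:ℕ) + 1 then r else 0)
            = ∑ k ∈ s.filter (fun k : Fin m => (j:ℕ) = (k:ℕ) + 1), r :=
              (Finset.sum_filter _ _).symm
          _ = (s.filter (fun k : Fin m => (j:ℕ) = (k:ℕ) + 1)).card • r :=
              Finset.sum_const r
          _ ≤ 1 * r := by
              rw [nsmul_eq_mul]
              exact mul_le_mul_of_nonneg_right (by exact_mod_cast hcard) hr0.le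
          _ = r := one_mul r
      rw [← Finset.sum_filter_add_sum_filter_not Finset.univ
        (fun k : Fin m => (j:ℕ) < (k:ℕ))]
      linarith
    -- geometric tail bound
    have hx0 : (0:ℝ) ≤ r⁻¹ := by positivity
    have hx1 : r⁻¹ < 1 := inv_lt_one_of_one_lt₀ hr
    have htail : (∑ k ∈ Finset.univ.filter (fun k : Fin m => (j:ℕ) < (k:ℕ)),
        B * (r⁻¹) ^ ((k:ℕ) - (j:ℕ))) ≤ B / (r - 1) := by
      have hinj : Set.InjOn (fun k : Fin m => (k:ℕ) - (j:ℕ) - 1)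
          (Finset.univ.filter (fun k : Fin m => (j:ℕ) < (k:ℕ))) := by
        intro a ha b hb hab
        simp only [Finset.coe_filter, Set.mem_setOf_eq] at ha hb
        simp only at hab
        exact Fin.ext (by omega)
      calc (∑ k ∈ Finset.univ.filter (fun k : Fin m => (j:ℕ) < (k:ℕ)),
            B * (r⁻¹) ^ ((k:ℕ) - (j:ℕ)))
          = B * r⁻¹ * ∑ k ∈ Finset.univ.filter (fun k : Fin m => (j:ℕ) < (k:ℕ)),
              (r⁻¹) ^ ((k:ℕ) - (j:ℕ) - 1) := by
            rw [Finset.mul_sum]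
            refine Finset.sum_congr rfl fun k hk => ?_
            simp only [Finset.mem_filter] at hk
            have h3 : (k:ℕ) - (j:ℕ) = ((k:ℕ) - (j:ℕ) - 1) + 1 := by omega
            conv_lhs => rw [h3, pow_succ]
            ring
        _ = B * r⁻¹ * ∑ i ∈ (Finset.univ.filter (fun k : Fin m => (j:ℕ) < (k:ℕ))).image
              (fun k : Fin m => (k:ℕ) - (j:ℕ) - 1), (r⁻¹) ^ i := by
            rw [Finset.sum_image (fun a ha b hb => hinj ha hb)]
        _ ≤ B * r⁻¹ * ∑ i ∈ Finset.range m, (r⁻¹) ^ i := by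
            refine mul_le_mul_of_nonneg_left ?_ (by positivity)
            refine Finset.sum_le_sum_of_subset_of_nonneg ?_
              (fun i _ _ => by positivity)
            intro i hi
            simp only [Finset.mem_image, Finset.mem_filter] at hi
            obtain ⟨k, hk, rfl⟩ := hi
            exact Finset.mem_range.mpr (by omega)
        _ ≤ B * r⁻¹ * (1 - r⁻¹)⁻¹ := by
            refine mul_le_mul_of_nonneg_left (aux_geom_sum_le hx0 hx1 m) (by positivity)
        _ = B / (r - 1) := by
            rw [mul_assoc]
            congr 1
            field_simp
    linarith
  have := le_trans hkey (mul_le_mul_of_nonneg_right hrowsum hc.le)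
  exact le_of_mul_le_mul_right this hc
end
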